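/- For every integer n ≥ 1, the number of Catalan words of length n avoiding the vincular pattern 11-1 equals the number of Catalan words of length n avoiding the vincular pattern 1-11. Moreover, for every m ≥ 1 the number of Catalan words of length n avoiding 11-1 with largest letter m equals the number avoiding 1-11 with largest letter m, and for every a ≥ 1 the number of Catalan words of length n avoiding 11-1 with last letter a equals the number avoiding 1-11 with last letter a. -/

import Mathlib

/-- A Catalan word: a word of positive integers starting with 1 in which each
letter exceeds its predecessor by at most 1. -/
def IsCatalanWord {n : ℕ} (w : Fin n → ℕ) : Prop :=
  (∀ i, 1 ≤ w i) ∧ (∀ h : 0 < n, w ⟨0, h⟩ = 1) ∧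
  ∀ i : ℕ, ∀ h : i + 1 < n, w ⟨i + 1, h⟩ ≤ w ⟨i, by omega⟩ + 1

/-- `w` contains the vincular pattern 1-11: there are indices `i < j` with
`w i = w j = w (j+1)`. -/
def Contains1_11 {n : ℕ} (w : Fin n → ℕ) : Prop :=
  ∃ i j : ℕ, ∃ hj : j + 1 < n, ∃ hij : i < j,
    w ⟨i, by omega⟩ = w ⟨j, by omega⟩ ∧ w ⟨j, by omega⟩ = w ⟨j + 1, hj⟩

/-- `w` contains the vincular pattern 11-1: there are indices `i` and `k` with
`i + 1 < k` and `w i = w (i+1) = w k`. -/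
def Contains11_1 {n : ℕ} (w : Fin n → ℕ) : Prop :=
  ∃ i k : ℕ, ∃ hk : k < n, ∃ hik : i + 1 < k,
    w ⟨i, by omega⟩ = w ⟨i + 1, by omega⟩ ∧ w ⟨i + 1, by omega⟩ = w ⟨k, hk⟩

namespace CatAux

/-- collapse adjacent duplicates -/
def red : List ℕ → List ℕ
  | [] => []
  | [a] => [a]
  | a :: b :: t => if a = b then red (b :: t) else a :: red (b :: t)

/-- set of values having an adjacent doubled occurrence -/
def dbl : List ℕ → Finset ℕ
  | [] => ∅
  | [_] => ∅
  | a :: b :: t => (if a = b then {a} else ∅) ∪ dbl (b :: t)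

/-- double the first occurrence of each element of `D` -/
def expF (D : Finset ℕ) : List ℕ → List ℕ
  | [] => []
  | a :: t => (if a ∈ D then [a, a] else [a]) ++ expF (D.erase a) t

/-- double the last occurrence of each element of `D` -/
def expL (D : Finset ℕ) : List ℕ → List ℕ
  | [] => []
  | a :: t => (if a ∈ D ∧ a ∉ t then [a, a] else [a]) ++ expL D t

@[simp] lemma mem_red {x : ℕ} : ∀ {l : List ℕ}, x ∈ red l ↔ x ∈ l := by
  intro l
  induction l using red.induct with
  | case1 => simp [red]
  | case2 a => simp [red]
  | case3 b t ih => simp [red, ih]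
  | case4 a b t h ih => simp [red, h, ih]

lemma head?_red : ∀ (l : List ℕ), (red l).head? = l.head? := by
  intro l
  induction l using red.induct with
  | case1 => rfl
  | case2 a => rfl
  | case3 b t ih => simp [red, ih]
  | case4 a b t h ih => simp [red, h]

lemma red_ne_nil : ∀ {l : List ℕ}, l ≠ [] → red l ≠ [] := by
  intro l hl
  have := head?_red l
  intro h
  rw [h] at this
  cases l with
  | nil => exact hl rfl
  | cons a t => simp at this

lemma getLast?_cons_of_ne_nil {a : ℕ} {m : List ℕ} (h : m ≠ []) :
    (a :: m).getLast? = m.getLast? := by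
  cases m with
  | nil => exact absurd rfl h
  | cons b t => simp [List.getLast?_cons_cons]

lemma getLast?_red : ∀ (l : List ℕ), (red l).getLast? = l.getLast? := by
  intro l
  induction l using red.induct with
  | case1 => rfl
  | case2 a => rfl
  | case3 b t ih => rw [red, if_pos rfl, ih, List.getLast?_cons_cons]
  | case4 a b t h ih =>
      rw [red, if_neg h, getLast?_cons_of_ne_nil (red_ne_nil (by simp)),
        ih, List.getLast?_cons_cons]

lemma chain'_red {R : ℕ → ℕ → Prop} : ∀ {l : List ℕ}, l.Chain' R → (red l).Chain' R := by
  intro l hl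
  induction l using red.induct with
  | case1 => exact List.isChain_nil
  | case2 a => exact List.isChain_singleton a
  | case3 b t ih => rw [red, if_pos rfl]; exact ih hl.tail
  | case4 a b t h ih =>
      rw [red, if_neg h]
      refine List.isChain_cons.2 ⟨?_, ih hl.tail⟩
      intro y hy
      rw [head?_red] at hy
      simp at hy
      subst hy
      exact (List.isChain_cons_cons.mp hl).1

lemma chain'_ne_red : ∀ {l : List ℕ}, (red l).Chain' (· ≠ ·) := by
  intro l
  induction l using red.induct with
  | case1 => exact List.isChain_nil
  | case2 a => exact List.isChain_singleton a
  | case3 b t ih => rw [red, if_pos rfl]; exact ih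
  | case4 a b t h ih =>
      rw [red, if_neg h]
      refine List.isChain_cons.2 ⟨?_, ih⟩
      intro y hy
      rw [head?_red] at hy
      simp at hy
      subst hy
      exact h

lemma dbl_cons (a : ℕ) (m : List ℕ) :
    dbl (a :: m) = (if m.head? = some a then {a} else ∅) ∪ dbl m := by
  cases m with
  | nil => simp [dbl]
  | cons b t =>
      by_cases h : a = b <;> simp [dbl, h, eq_comm]

lemma mem_dbl {x : ℕ} : ∀ {l : List ℕ}, x ∈ dbl l → x ∈ l := by
  intro l hx
  induction l using dbl.induct with
  | case1 => simp [dbl] at hx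
  | case2 a => simp [dbl] at hx
  | case3 a b t ih =>
      rw [dbl] at hx
      rcases Finset.mem_union.mp hx with h | h
      · split at h
        · simp at h; simp [h]
        · simp at h
      · simp [ih h]

lemma mem_dbl_sandwich (a : ℕ) : ∀ (u v : List ℕ), a ∈ dbl (u ++ a :: a :: v) := by
  intro u v
  induction u with
  | nil => simp [dbl]
  | cons b u ih =>
      rw [List.cons_append, dbl_cons]
      exact Finset.mem_union_right _ ih

lemma dbl_mem_iff {x : ℕ} : ∀ {l : List ℕ}, x ∈ dbl l ↔ ∃ u v, l = u ++ x :: x :: v := by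
  intro l
  constructor
  · intro hx
    induction l using dbl.induct with
    | case1 => simp [dbl] at hx
    | case2 a => simp [dbl] at hx
    | case3 a b t ih =>
        rw [dbl] at hx
        rcases Finset.mem_union.mp hx with h | h
        · split at h
          · simp at h
            subst h
            rename_i hab; subst hab
            exact ⟨[], t, rfl⟩
          · simp at h
        · obtain ⟨u, v, huv⟩ := ih h
          exact ⟨a :: u, v, by rw [huv]; rfl⟩
  · rintro ⟨u, v, rfl⟩
    exact mem_dbl_sandwich x u v

@[simp] lemma mem_expF {x : ℕ} : ∀ {D : Finset ℕ} {l : List ℕ}, x ∈ expF D l ↔ x ∈ l := by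
  intro D l
  induction l generalizing D with
  | nil => simp [expF]
  | cons a t ih =>
      rw [expF]
      by_cases h : a ∈ D <;> simp [h, ih]

@[simp] lemma mem_expL {x : ℕ} : ∀ {D : Finset ℕ} {l : List ℕ}, x ∈ expL D l ↔ x ∈ l := by
  intro D l
  induction l with
  | nil => simp [expL]
  | cons a t ih =>
      rw [expL]
      split <;> simp [ih]

lemma head?_expF (D : Finset ℕ) (a : ℕ) (t : List ℕ) :
    (expF D (a :: t)).head? = some a := by
  rw [expF]; split <;> rfl

lemma head?_expL (D : Finset ℕ) (a : ℕ) (t : List ℕ) :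
    (expL D (a :: t)).head? = some a := by
  rw [expL]; split <;> rfl

lemma expF_ne_nil (D : Finset ℕ) (a : ℕ) (t : List ℕ) : expF D (a :: t) ≠ [] := by
  intro h
  have := head?_expF D a t
  rw [h] at this; simp at this

lemma expL_ne_nil (D : Finset ℕ) (a : ℕ) (t : List ℕ) : expL D (a :: t) ≠ [] := by
  intro h
  have := head?_expL D a t
  rw [h] at this; simp at this

lemma getLast?_expF : ∀ (D : Finset ℕ) (l : List ℕ), (expF D l).getLast? = l.getLast? := by
  intro D l
  induction l generalizing D with
  | nil => rfl
  | cons a t ih =>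
      cases t with
      | nil => rw [expF]; split <;> rfl
      | cons b t' =>
          rw [expF, List.getLast?_append, ih, List.getLast?_cons_cons]
          cases hx : (b :: t').getLast? with
          | none => simp [List.getLast?_eq_none_iff] at hx
          | some x => simp [hx]

lemma getLast?_expL : ∀ (D : Finset ℕ) (l : List ℕ), (expL D l).getLast? = l.getLast? := by
  intro D l
  induction l with
  | nil => rfl
  | cons a t ih =>
      cases t with
      | nil => rw [expL]; split <;> rfl
      | cons b t' =>
          rw [expL, List.getLast?_append, ih, List.getLast?_cons_cons]
          cases hx : (b :: t').getLast? with
          | none => simp [List.getLast?_eq_none_iff] at hx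
          | some x => simp [hx]

lemma chain'_expF {R : ℕ → ℕ → Prop} (hrefl : ∀ a : ℕ, R a a) :
    ∀ {D : Finset ℕ} {l : List ℕ}, l.Chain' R → (expF D l).Chain' R := by
  intro D l hl
  induction l generalizing D with
  | nil => exact List.isChain_nil
  | cons a t ih =>
      rw [expF]
      have htail : (expF (D.erase a) t).Chain' R := ih hl.tail
      have hhd : ∀ y ∈ (expF (D.erase a) t).head?, R a y := by
        intro y hy
        cases t with
        | nil => simp [expF] at hy
        | cons b t' =>
            rw [head?_expF] at hy
            simp at hy; subst hy
            exact (List.isChain_cons_cons.mp hl).1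
      by_cases h : a ∈ D <;> simp only [h, if_true, if_false]
      · refine List.isChain_cons.2 ⟨?_, List.isChain_cons.2 ⟨hhd, htail⟩⟩
        intro y hy
        simp at hy; subst hy; exact hrefl a
      · exact List.isChain_cons.2 ⟨hhd, htail⟩

lemma chain'_expL {R : ℕ → ℕ → Prop} (hrefl : ∀ a : ℕ, R a a) :
    ∀ {D : Finset ℕ} {l : List ℕ}, l.Chain' R → (expL D l).Chain' R := by
  intro D l hl
  induction l with
  | cons a t ih =>
      rw [expL]
      have htail : (expL D t).Chain' R := ih hl.tail
      have hhd : ∀ y ∈ (expL D t).head?, R a y := by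
        intro y hy
        cases t with
        | nil => simp [expL] at hy
        | cons b t' =>
            rw [head?_expL] at hy
            simp at hy; subst hy
            exact (List.isChain_cons_cons.mp hl).1
      split
      · refine List.isChain_cons.2 ⟨?_, List.isChain_cons.2 ⟨hhd, htail⟩⟩
        intro y hy
        simp at hy; subst hy; exact hrefl a
      · exact List.isChain_cons.2 ⟨hhd, htail⟩
  | nil => exact List.isChain_nil

lemma expL_insert {a : ℕ} : ∀ {D : Finset ℕ} {l : List ℕ}, a ∉ l →
    expL (insert a D) l = expL D l := by
  intro D l ha
  induction l with
  | nil => rfl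
  | cons b t ih =>
      have hba : b ≠ a := by intro h; subst h; exact ha (by simp)
      rw [expL, expL, ih (fun h => ha (by simp [h]))]
      congr 1
      simp [Finset.mem_insert, hba]


lemma red_cons_of_ne {a : ℕ} {m : List ℕ} (h : m.head? ≠ some a) :
    red (a :: m) = a :: red m := by
  cases m with
  | nil => rfl
  | cons b t =>
      have : a ≠ b := by intro hab; exact h (by simp [hab])
      simp [red, this]

lemma red_expF : ∀ {D : Finset ℕ} {l : List ℕ}, l.Chain' (· ≠ ·) → red (expF D l) = l := by
  intro D l hl
  induction l generalizing D with
  | nil => rfl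
  | cons a t ih =>
      have hne : (expF (D.erase a) t).head? ≠ some a := by
        cases t with
        | nil => simp [expF]
        | cons b t' =>
            rw [head?_expF]
            simp
            exact fun h => (List.isChain_cons_cons.mp hl).1 h.symm
      rw [expF]
      by_cases h : a ∈ D <;> simp only [h, if_true, if_false]
      · show red (a :: a :: expF (D.erase a) t) = a :: t
        rw [red, if_pos rfl, red_cons_of_ne hne, ih hl.tail]
      · show red (a :: expF (D.erase a) t) = a :: t
        rw [red_cons_of_ne hne, ih hl.tail]

lemma red_expL : ∀ {D : Finset ℕ} {l : List ℕ}, l.Chain' (· ≠ ·) → red (expL D l) = l := by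
  intro D l hl
  induction l with
  | nil => rfl
  | cons a t ih =>
      have hne : (expL D t).head? ≠ some a := by
        cases t with
        | nil => simp [expL]
        | cons b t' =>
            rw [head?_expL]
            simp
            exact fun h => (List.isChain_cons_cons.mp hl).1 h.symm
      rw [expL]
      split
      · show red (a :: a :: expL D t) = a :: t
        rw [red, if_pos rfl, red_cons_of_ne hne, ih hl.tail]
      · show red (a :: expL D t) = a :: t
        rw [red_cons_of_ne hne, ih hl.tail]

lemma setF_pos {a : ℕ} {D : Finset ℕ} {t : List ℕ} (h : a ∈ D) :
    (a :: t).toFinset ∩ D = insert a (t.toFinset ∩ D.erase a) := by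
  ext x
  simp only [List.toFinset_cons, Finset.mem_inter, Finset.mem_insert, List.mem_toFinset,
    Finset.mem_erase]
  constructor
  · rintro ⟨rfl | hxt, hxD⟩
    · exact Or.inl rfl
    · by_cases hxa : x = a
      · exact Or.inl hxa
      · exact Or.inr ⟨hxt, hxa, hxD⟩
  · rintro (rfl | ⟨hxt, _, hxD⟩)
    · exact ⟨Or.inl rfl, h⟩
    · exact ⟨Or.inr hxt, hxD⟩

lemma setF_neg {a : ℕ} {D : Finset ℕ} {t : List ℕ} (h : a ∉ D) :
    (a :: t).toFinset ∩ D = t.toFinset ∩ D.erase a := by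
  ext x
  simp only [List.toFinset_cons, Finset.mem_inter, Finset.mem_insert, List.mem_toFinset,
    Finset.mem_erase]
  constructor
  · rintro ⟨rfl | hxt, hxD⟩
    · exact absurd hxD h
    · refine ⟨hxt, fun hxa => ?_, hxD⟩
      subst hxa; exact h hxD
  · rintro ⟨hxt, _, hxD⟩
    exact ⟨Or.inr hxt, hxD⟩

lemma setL_pos {a : ℕ} {D : Finset ℕ} {t : List ℕ} (h : a ∈ D) :
    (a :: t).toFinset ∩ D = insert a (t.toFinset ∩ D) := by
  ext x
  simp only [List.toFinset_cons, Finset.mem_inter, Finset.mem_insert, List.mem_toFinset]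
  constructor
  · rintro ⟨rfl | hxt, hxD⟩
    · exact Or.inl rfl
    · exact Or.inr ⟨hxt, hxD⟩
  · rintro (rfl | ⟨hxt, hxD⟩)
    · exact ⟨Or.inl rfl, h⟩
    · exact ⟨Or.inr hxt, hxD⟩

lemma setL_neg {a : ℕ} {D : Finset ℕ} {t : List ℕ} (h : a ∈ D → a ∈ t) :
    (a :: t).toFinset ∩ D = t.toFinset ∩ D := by
  ext x
  simp only [List.toFinset_cons, Finset.mem_inter, Finset.mem_insert, List.mem_toFinset]
  constructor
  · rintro ⟨rfl | hxt, hxD⟩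
    · exact ⟨h hxD, hxD⟩
    · exact ⟨hxt, hxD⟩
  · rintro ⟨hxt, hxD⟩
    exact ⟨Or.inr hxt, hxD⟩

lemma dbl_expF : ∀ {D : Finset ℕ} {l : List ℕ}, l.Chain' (· ≠ ·) →
    dbl (expF D l) = l.toFinset ∩ D := by
  intro D l hl
  induction l generalizing D with
  | nil => simp [expF, dbl]
  | cons a t ih =>
      have hne : (expF (D.erase a) t).head? ≠ some a := by
        cases t with
        | nil => simp [expF]
        | cons b t' =>
            rw [head?_expF]
            simp
            exact fun h => (List.isChain_cons_cons.mp hl).1 h.symm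
      have hrec : dbl (expF (D.erase a) t) = t.toFinset ∩ D.erase a := ih hl.tail
      rw [expF]
      by_cases h : a ∈ D <;> simp only [h, if_true, if_false]
      · show dbl (a :: a :: expF (D.erase a) t) = (a :: t).toFinset ∩ D
        rw [dbl_cons, dbl_cons, if_neg hne,
          if_pos (show (a :: expF (D.erase a) t).head? = some a from rfl), hrec,
          setF_pos h, Finset.insert_eq, Finset.empty_union]
      · show dbl (a :: expF (D.erase a) t) = (a :: t).toFinset ∩ D
        rw [dbl_cons, if_neg hne, hrec, setF_neg h, Finset.empty_union]

lemma dbl_expL : ∀ {D : Finset ℕ} {l : List ℕ}, l.Chain' (· ≠ ·) →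
    dbl (expL D l) = l.toFinset ∩ D := by
  intro D l hl
  induction l with
  | nil => simp [expL, dbl]
  | cons a t ih =>
      have hne : (expL D t).head? ≠ some a := by
        cases t with
        | nil => simp [expL]
        | cons b t' =>
            rw [head?_expL]
            simp
            exact fun h => (List.isChain_cons_cons.mp hl).1 h.symm
      have hrec : dbl (expL D t) = t.toFinset ∩ D := ih hl.tail
      rw [expL]
      split
      · rename_i hcond
        show dbl (a :: a :: expL D t) = (a :: t).toFinset ∩ D
        rw [dbl_cons, dbl_cons, if_neg hne,
          if_pos (show (a :: expL D t).head? = some a from rfl), hrec,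
          setL_pos hcond.1, Finset.insert_eq, Finset.empty_union]
      · rename_i hcond
        show dbl (a :: expL D t) = (a :: t).toFinset ∩ D
        rw [dbl_cons, if_neg hne, hrec,
          setL_neg (fun hD => by by_contra hat; exact hcond ⟨hD, hat⟩), Finset.empty_union]

lemma length_expF : ∀ (D : Finset ℕ) (l : List ℕ),
    (expF D l).length = l.length + (l.toFinset ∩ D).card := by
  intro D l
  induction l generalizing D with
  | nil => simp [expF]
  | cons a t ih =>
      rw [expF, List.length_append, ih (D.erase a)]
      by_cases h : a ∈ D <;> simp only [h, if_true, if_false]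
      · rw [setF_pos h, Finset.card_insert_of_notMem (by simp [Finset.mem_inter])]
        simp; omega
      · rw [setF_neg h]
        simp; omega

lemma length_expL : ∀ (D : Finset ℕ) (l : List ℕ),
    (expL D l).length = l.length + (l.toFinset ∩ D).card := by
  intro D l
  induction l with
  | nil => simp [expL]
  | cons a t ih =>
      rw [expL, List.length_append, ih]
      split
      · rename_i hcond
        rw [setL_pos hcond.1, Finset.card_insert_of_notMem
          (by simp only [Finset.mem_inter, List.mem_toFinset]; exact fun h => hcond.2 h.1)]
        simp; omega
      · rename_i hcond
        rw [setL_neg (fun hD => by by_contra hat; exact hcond ⟨hD, hat⟩)]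
        simp; omega


/-- avoids 11-1 : a doubled pair has no later occurrence of the same value -/
def AvA (l : List ℕ) : Prop := ∀ u (a : ℕ) v, l = u ++ a :: a :: v → a ∉ v
/-- avoids 1-11 : a doubled pair has no earlier occurrence of the same value -/
def AvB (l : List ℕ) : Prop := ∀ u (a : ℕ) v, l = u ++ a :: a :: v → a ∉ u

lemma AvA_tail {b : ℕ} {l : List ℕ} (h : AvA (b :: l)) : AvA l := by
  intro u a v huv ha
  exact h (b :: u) a v (by rw [huv]; rfl) ha

lemma AvB_tail {b : ℕ} {l : List ℕ} (h : AvB (b :: l)) : AvB l := by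
  intro u a v huv ha
  exact h (b :: u) a v (by rw [huv]; rfl) (by simp [ha])

lemma reconB : ∀ {l : List ℕ}, AvB l → expF (dbl l) (red l) = l := by
  intro l hl
  induction l using red.induct with
  | case1 => rfl
  | case2 a => rfl
  | case3 a t ih =>
      -- l = a :: a :: t
      have hnotrip : t.head? ≠ some a := by
        intro h
        cases t with
        | nil => simp at h
        | cons c t' =>
            simp at h
            exact hl [a] a t' (by simp [h]) (by simp)
      have hadbl : a ∉ dbl (a :: t) := by
        intro hmem
        obtain ⟨u, v, huv⟩ := dbl_mem_iff.mp hmem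
        exact hl (a :: u) a v (by rw [huv]; rfl) (by simp)
      have hIH : expF (dbl (a :: t)) (red (a :: t)) = a :: t := ih (AvB_tail hl)
      have hred : red (a :: a :: t) = red (a :: t) := by rw [red, if_pos rfl]
      have hdbl : dbl (a :: a :: t) = insert a (dbl (a :: t)) := by
        rw [dbl_cons]
        simp [Finset.insert_eq, -Finset.singleton_union]
      rw [hred, hdbl]
      rw [red_cons_of_ne hnotrip] at hIH ⊢
      rw [expF, if_neg hadbl] at hIH
      simp only [List.singleton_append, List.cons.injEq, true_and] at hIH
      rw [expF, if_pos (Finset.mem_insert_self a _), Finset.erase_insert_eq_erase]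
      simp only [List.cons_append, List.nil_append, List.cons.injEq, true_and]
      exact hIH
  | case4 a b t hab ih =>
      -- l = a :: b :: t, a ≠ b
      have hadbl : a ∉ dbl (b :: t) := by
        intro hmem
        obtain ⟨u, v, huv⟩ := dbl_mem_iff.mp hmem
        exact hl (a :: u) a v (by rw [huv]; rfl) (by simp)
      have hIH : expF (dbl (b :: t)) (red (b :: t)) = b :: t := ih (AvB_tail hl)
      have hdbl : dbl (a :: b :: t) = dbl (b :: t) := by
        rw [dbl_cons]; simp [hab, eq_comm]
      rw [hdbl, red, if_neg hab, expF, if_neg hadbl, Finset.erase_eq_of_notMem hadbl]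
      simp only [List.singleton_append, List.cons.injEq, true_and]
      exact hIH

lemma reconA : ∀ {l : List ℕ}, AvA l → expL (dbl l) (red l) = l := by
  intro l hl
  induction l using red.induct with
  | case1 => rfl
  | case2 a => rfl
  | case3 a t ih =>
      -- l = a :: a :: t
      have hat : a ∉ t := hl [] a t rfl
      have hnotrip : t.head? ≠ some a := by
        intro h
        cases t with
        | nil => simp at h
        | cons c t' => simp at h; exact hat (by simp [h])
      have hIH : expL (dbl (a :: t)) (red (a :: t)) = a :: t := ih (AvA_tail hl)
      have hred : red (a :: a :: t) = red (a :: t) := by rw [red, if_pos rfl]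
      have hdbl : dbl (a :: a :: t) = insert a (dbl (a :: t)) := by
        rw [dbl_cons]
        simp [Finset.insert_eq, -Finset.singleton_union]
      have hdbl2 : dbl (a :: t) = dbl t := by
        rw [dbl_cons, if_neg hnotrip, Finset.empty_union]
      have haredt : a ∉ red t := fun h => hat (mem_red.mp h)
      rw [hred, hdbl, hdbl2]
      rw [red_cons_of_ne hnotrip] at hIH ⊢
      rw [hdbl2] at hIH
      rw [expL, if_neg (by
        rintro ⟨hmem, -⟩
        exact hat (mem_dbl (l := t) hmem))] at hIH
      simp only [List.singleton_append, List.cons.injEq, true_and] at hIH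
      rw [expL, if_pos ⟨Finset.mem_insert_self a _, haredt⟩, expL_insert haredt]
      simp only [List.cons_append, List.nil_append, List.cons.injEq, true_and]
      exact hIH
  | case4 a b t hab ih =>
      have hIH : expL (dbl (b :: t)) (red (b :: t)) = b :: t := ih (AvA_tail hl)
      have hdbl : dbl (a :: b :: t) = dbl (b :: t) := by
        rw [dbl_cons]; simp [hab, eq_comm]
      have hcond : ¬(a ∈ dbl (b :: t) ∧ a ∉ red (b :: t)) := by
        rintro ⟨hmem, hnred⟩
        exact hnred (mem_red.mpr (mem_dbl hmem))
      rw [hdbl, red, if_neg hab, expL, if_neg hcond]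
      simp only [List.singleton_append, List.cons.injEq, true_and]
      exact hIH


lemma avB_expF : ∀ {D : Finset ℕ} {l : List ℕ}, l.Chain' (· ≠ ·) → AvB (expF D l) := by
  intro D l hl
  induction l generalizing D with
  | nil =>
      intro u a v h ha
      rw [expF] at h
      exact absurd h.symm (by simp)
  | cons c t ih =>
      intro u a v heq ha
      have hdblm : dbl (expF (D.erase c) t) = t.toFinset ∩ D.erase c := dbl_expF hl.tail
      have hheadm : ∀ x : ℕ, (expF (D.erase c) t).head? = some x → x ≠ c := by
        intro x hx hxc
        subst hxc
        cases t with
        | nil => simp [expF] at hx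
        | cons e t' =>
            rw [head?_expF] at hx
            simp at hx
            exact (List.isChain_cons_cons.mp hl).1 hx.symm
      -- key fact used in the "deep" case
      have hdeep : ∀ u'' : List ℕ, expF (D.erase c) t = u'' ++ a :: a :: v → a ≠ c ∧ a ∉ u'' := by
        intro u'' h
        constructor
        · intro hac
          have hmem : a ∈ dbl (expF (D.erase c) t) := by
            rw [h]; exact mem_dbl_sandwich a u'' v
          rw [hdblm] at hmem
          exact (Finset.mem_erase.mp (Finset.mem_inter.mp hmem).2).1 hac
        · exact ih hl.tail u'' a v h
      rw [expF] at heq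
      by_cases hc : c ∈ D
      · rw [if_pos hc] at heq
        cases u with
        | nil => simp at ha
        | cons x u' =>
            simp only [List.cons_append, List.cons.injEq] at heq
            obtain ⟨hxc, heq⟩ := heq
            cases u' with
            | nil =>
                simp only [List.nil_append, List.cons.injEq] at heq
                obtain ⟨hca, hm⟩ := heq
                exact hheadm a (by rw [hm]; rfl) hca.symm
            | cons y u'' =>
                simp only [List.cons_append, List.cons.injEq] at heq
                obtain ⟨hyc, heq⟩ := heq
                obtain ⟨hac, hau⟩ := hdeep u'' heq
                rcases List.mem_cons.mp ha with h1 | h1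
                · exact hac (h1.trans hxc.symm)
                · rcases List.mem_cons.mp h1 with h2 | h2
                  · exact hac (h2.trans hyc.symm)
                  · exact hau h2
      · rw [if_neg hc] at heq
        cases u with
        | nil => simp at ha
        | cons x u' =>
            simp only [List.singleton_append, List.cons_append, List.cons.injEq] at heq
            obtain ⟨hxc, heq⟩ := heq
            obtain ⟨hac, hau⟩ := hdeep u' heq
            rcases List.mem_cons.mp ha with h1 | h1
            · exact hac (h1.trans hxc.symm)
            · exact hau h1

lemma avA_expL : ∀ {D : Finset ℕ} {l : List ℕ}, l.Chain' (· ≠ ·) → AvA (expL D l) := by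
  intro D l hl
  induction l with
  | nil =>
      intro u a v h ha
      rw [expL] at h
      exact absurd h.symm (by simp)
  | cons c t ih =>
      intro u a v heq hav
      have hheadm : ∀ x : ℕ, (expL D t).head? = some x → x ≠ c := by
        intro x hx hxc
        subst hxc
        cases t with
        | nil => simp [expL] at hx
        | cons e t' =>
            rw [head?_expL] at hx
            simp at hx
            exact (List.isChain_cons_cons.mp hl).1 hx.symm
      rw [expL] at heq
      split at heq
      · rename_i hcond
        cases u with
        | nil =>
            simp only [List.nil_append, List.cons_append, List.cons.injEq] at heq
            obtain ⟨hca, heq⟩ := heq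
            obtain ⟨hca2, hm⟩ := heq
            -- a = c, v = expL D t
            subst hca
            rw [← hm] at hav
            exact hcond.2 (mem_expL.mp hav)
        | cons x u' =>
            simp only [List.cons_append, List.cons.injEq] at heq
            obtain ⟨hxc, heq⟩ := heq
            cases u' with
            | nil =>
                simp only [List.nil_append, List.cons.injEq] at heq
                obtain ⟨hca, hm⟩ := heq
                exact hheadm a (by rw [hm]; rfl) hca.symm
            | cons y u'' =>
                simp only [List.cons_append, List.cons.injEq] at heq
                obtain ⟨hyc, heq⟩ := heq
                exact ih hl.tail u'' a v heq hav
      · cases u with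
        | nil =>
            simp only [List.nil_append, List.cons_append, List.cons.injEq,
              List.singleton_append] at heq
            obtain ⟨hca, hm⟩ := heq
            exact hheadm a (by rw [hm]; rfl) hca.symm
        | cons x u' =>
            simp only [List.singleton_append, List.cons_append, List.cons.injEq] at heq
            obtain ⟨hxc, heq⟩ := heq
            exact ih hl.tail u' a v heq hav


lemma head?_expF_any (D : Finset ℕ) (l : List ℕ) : (expF D l).head? = l.head? := by
  cases l with
  | nil => rfl
  | cons a t => rw [head?_expF]; rfl

lemma head?_expL_any (D : Finset ℕ) (l : List ℕ) : (expL D l).head? = l.head? := by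
  cases l with
  | nil => rfl
  | cons a t => rw [head?_expL]; rfl

/-- the bijection: move each doubled run to the first occurrence of its value -/
def phi (l : List ℕ) : List ℕ := expF (dbl l) (red l)
/-- the inverse: move each doubled run to the last occurrence of its value -/
def psi (l : List ℕ) : List ℕ := expL (dbl l) (red l)

lemma dbl_subset_red (l : List ℕ) : (red l).toFinset ∩ dbl l = dbl l := by
  apply Finset.inter_eq_right.mpr
  intro x hx
  rw [List.mem_toFinset, mem_red]
  exact mem_dbl hx

@[simp] lemma mem_phi {x : ℕ} {l : List ℕ} : x ∈ phi l ↔ x ∈ l := by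
  rw [phi, mem_expF, mem_red]

@[simp] lemma mem_psi {x : ℕ} {l : List ℕ} : x ∈ psi l ↔ x ∈ l := by
  rw [psi, mem_expL, mem_red]

lemma head?_phi (l : List ℕ) : (phi l).head? = l.head? := by
  rw [phi, head?_expF_any, head?_red]

lemma head?_psi (l : List ℕ) : (psi l).head? = l.head? := by
  rw [psi, head?_expL_any, head?_red]

lemma getLast?_phi (l : List ℕ) : (phi l).getLast? = l.getLast? := by
  rw [phi, getLast?_expF, getLast?_red]

lemma getLast?_psi (l : List ℕ) : (psi l).getLast? = l.getLast? := by
  rw [psi, getLast?_expL, getLast?_red]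

lemma chain'_phi {R : ℕ → ℕ → Prop} (hrefl : ∀ a, R a a) {l : List ℕ}
    (h : l.Chain' R) : (phi l).Chain' R :=
  chain'_expF hrefl (chain'_red h)

lemma chain'_psi {R : ℕ → ℕ → Prop} (hrefl : ∀ a, R a a) {l : List ℕ}
    (h : l.Chain' R) : (psi l).Chain' R :=
  chain'_expL hrefl (chain'_red h)

lemma avB_phi (l : List ℕ) : AvB (phi l) := avB_expF chain'_ne_red

lemma avA_psi (l : List ℕ) : AvA (psi l) := avA_expL chain'_ne_red

lemma psi_phi {l : List ℕ} (h : AvA l) : psi (phi l) = l := by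
  rw [psi, phi, dbl_expF chain'_ne_red, red_expF chain'_ne_red, dbl_subset_red]
  exact reconA h

lemma phi_psi {l : List ℕ} (h : AvB l) : phi (psi l) = l := by
  rw [phi, psi, dbl_expL chain'_ne_red, red_expL chain'_ne_red, dbl_subset_red]
  exact reconB h

lemma length_phi {l : List ℕ} (h : AvA l) : (phi l).length = l.length := by
  conv_rhs => rw [← reconA h]
  rw [phi, length_expF, length_expL]

lemma length_psi {l : List ℕ} (h : AvB l) : (psi l).length = l.length := by
  conv_rhs => rw [← reconB h]
  rw [psi, length_expF, length_expL]





lemma getElem_ofFn' {n : ℕ} (w : Fin n → ℕ) (k : ℕ) (hk : k < n) :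
    (List.ofFn w)[k]'(by simpa using hk) = w ⟨k, hk⟩ := by
  rw [List.getElem_ofFn]

lemma contains1_11_iff {n : ℕ} (w : Fin n → ℕ) :
    Contains1_11 w ↔ ∃ (u : List ℕ) (a : ℕ) (v : List ℕ), List.ofFn w = u ++ a :: a :: v ∧ a ∈ u := by
  set l := List.ofFn w with hl
  have hlen : l.length = n := by simp [hl]
  constructor
  · rintro ⟨i, j, hj, hij, h1, h2⟩
    have hjl : j < l.length := by omega
    have hjl1 : j + 1 < l.length := by omega
    refine ⟨l.take j, l[j], l.drop (j + 2), ?_, ?_⟩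
    · have h0 : l.take j ++ l.drop j = l := List.take_append_drop j l
      rw [List.drop_eq_getElem_cons hjl, List.drop_eq_getElem_cons hjl1] at h0
      have hjj : l[j + 1] = l[j] := by
        rw [getElem_ofFn' w (j+1) (by omega), getElem_ofFn' w j (by omega)]
        exact h2.symm
      rw [hjj] at h0
      exact h0.symm
    · have hil : i < (l.take j).length := by
        rw [List.length_take]; omega
      have : (l.take j)[i] = l[j] := by
        rw [List.getElem_take, getElem_ofFn' w i (by omega), getElem_ofFn' w j (by omega)]
        exact h1
      rw [← this]
      exact List.getElem_mem hil
  · rintro ⟨u, a, v, he, ha⟩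
    have hlen2 : n = u.length + v.length + 2 := by
      rw [← hlen, he]; simp; omega
    obtain ⟨i, hi, hiu⟩ := List.mem_iff_getElem.mp ha
    have hget : ∀ (k : ℕ) (hk : k < n), w ⟨k, hk⟩ = l[k]'(by omega) :=
      fun k hk => (getElem_ofFn' w k hk).symm
    refine ⟨i, u.length, by omega, by omega, ?_, ?_⟩
    · rw [hget i (by omega), hget u.length (by omega)]
      have e1 : l[i]'(by omega) = a := by
        rw [List.getElem_of_eq he, List.getElem_append_left hi]
        exact hiu
      have e2 : l[u.length]'(by omega) = a := by
        rw [List.getElem_of_eq he, List.getElem_append_right (le_refl u.length)]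
        simp
      rw [e1, e2]
    · rw [hget u.length (by omega), hget (u.length + 1) (by omega)]
      have e2 : l[u.length]'(by omega) = a := by
        rw [List.getElem_of_eq he, List.getElem_append_right (le_refl u.length)]
        simp
      have e3 : l[u.length + 1]'(by omega) = a := by
        rw [List.getElem_of_eq he, List.getElem_append_right (by omega : u.length ≤ u.length + 1)]
        have : u.length + 1 - u.length = 1 := by omega
        simp [this]
      rw [e2, e3]

lemma contains11_1_iff {n : ℕ} (w : Fin n → ℕ) :
    Contains11_1 w ↔ ∃ (u : List ℕ) (a : ℕ) (v : List ℕ), List.ofFn w = u ++ a :: a :: v ∧ a ∈ v := by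
  set l := List.ofFn w with hl
  have hlen : l.length = n := by simp [hl]
  constructor
  · rintro ⟨i, k, hk, hik, h1, h2⟩
    have hil : i < l.length := by omega
    have hil1 : i + 1 < l.length := by omega
    refine ⟨l.take i, l[i], l.drop (i + 2), ?_, ?_⟩
    · have h0 : l.take i ++ l.drop i = l := List.take_append_drop i l
      rw [List.drop_eq_getElem_cons hil, List.drop_eq_getElem_cons hil1] at h0
      have hii : l[i + 1] = l[i] := by
        rw [getElem_ofFn' w (i+1) (by omega), getElem_ofFn' w i (by omega)]
        exact h1.symm
      rw [hii] at h0
      exact h0.symm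
    · have hkd : k - (i + 2) < (l.drop (i + 2)).length := by
        rw [List.length_drop]; omega
      have : (l.drop (i + 2))[k - (i + 2)] = l[i]'hil := by
        rw [List.getElem_drop]
        have hidx : i + 2 + (k - (i + 2)) = k := by omega
        have : l[i + 2 + (k - (i + 2))]'(by omega) = l[k]'(by omega) := by
          congr 1
        rw [this, getElem_ofFn' w k (by omega), getElem_ofFn' w i (by omega)]
        exact (h1.trans h2).symm
      rw [← this]
      exact List.getElem_mem hkd
  · rintro ⟨u, a, v, he, ha⟩
    have hlen2 : n = u.length + v.length + 2 := by
      rw [← hlen, he]; simp; omega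
    obtain ⟨m, hm, hmv⟩ := List.mem_iff_getElem.mp ha
    have hget : ∀ (k : ℕ) (hk : k < n), w ⟨k, hk⟩ = l[k]'(by omega) :=
      fun k hk => (getElem_ofFn' w k hk).symm
    refine ⟨u.length, u.length + 2 + m, by omega, by omega, ?_, ?_⟩
    · rw [hget u.length (by omega), hget (u.length + 1) (by omega)]
      have e2 : l[u.length]'(by omega) = a := by
        rw [List.getElem_of_eq he, List.getElem_append_right (le_refl u.length)]
        simp
      have e3 : l[u.length + 1]'(by omega) = a := by
        rw [List.getElem_of_eq he, List.getElem_append_right (by omega : u.length ≤ u.length + 1)]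
        have : u.length + 1 - u.length = 1 := by omega
        simp [this]
      rw [e2, e3]
    · rw [hget (u.length + 1) (by omega), hget (u.length + 2 + m) (by omega)]
      have e3 : l[u.length + 1]'(by omega) = a := by
        rw [List.getElem_of_eq he, List.getElem_append_right (by omega : u.length ≤ u.length + 1)]
        have : u.length + 1 - u.length = 1 := by omega
        simp [this]
      have e4 : l[u.length + 2 + m]'(by omega) = a := by
        rw [List.getElem_of_eq he, List.getElem_append_right (by omega : u.length ≤ u.length + 2 + m)]
        have : u.length + 2 + m - u.length = m + 2 := by omega
        simp only [this, List.getElem_cons_succ]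
        exact hmv
      rw [e3, e4]



def CatL (l : List ℕ) : Prop :=
  (∀ x ∈ l, 1 ≤ x) ∧ l.head? = some 1 ∧ l.Chain' (fun a b => b ≤ a + 1)

lemma isCatalan_iff {n : ℕ} (hn : 0 < n) (w : Fin n → ℕ) :
    IsCatalanWord w ↔ CatL (List.ofFn w) := by
  set l := List.ofFn w with hl
  have hlen : l.length = n := by simp [hl]
  constructor
  · rintro ⟨h1, h2, h3⟩
    refine ⟨?_, ?_, ?_⟩
    · intro x hx
      rw [hl, List.mem_ofFn] at hx
      obtain ⟨i, rfl⟩ := hx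
      exact h1 i
    · rw [List.head?_eq_getElem?, List.getElem?_eq_getElem (by omega : 0 < l.length),
        getElem_ofFn' w 0 hn, h2 hn]
    · rw [List.Chain', List.isChain_iff_getElem]
      intro i hi
      rw [getElem_ofFn' w i (by omega), getElem_ofFn' w (i + 1) (by omega)]
      exact h3 i (by omega)
  · rintro ⟨h1, h2, h3⟩
    refine ⟨?_, ?_, ?_⟩
    · intro i
      exact h1 (w i) (by rw [hl, List.mem_ofFn]; exact ⟨i, rfl⟩)
    · intro h
      have := List.getElem?_eq_getElem (by omega : 0 < l.length)
      rw [← List.head?_eq_getElem?, h2, getElem_ofFn' w 0 h] at this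
      exact (Option.some_inj.mp this).symm
    · intro i h
      rw [List.Chain', List.isChain_iff_getElem] at h3
      have := h3 i (by omega)
      rw [getElem_ofFn' w i (by omega), getElem_ofFn' w (i + 1) (by omega)] at this
      exact this

lemma not_contains11_1_iff {n : ℕ} (w : Fin n → ℕ) :
    ¬ Contains11_1 w ↔ AvA (List.ofFn w) := by
  rw [contains11_1_iff]
  constructor
  · intro h u a v heq hav
    exact h ⟨u, a, v, heq, hav⟩
  · rintro h ⟨u, a, v, heq, hav⟩
    exact h u a v heq hav

lemma not_contains1_11_iff {n : ℕ} (w : Fin n → ℕ) :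
    ¬ Contains1_11 w ↔ AvB (List.ofFn w) := by
  rw [contains1_11_iff]
  constructor
  · intro h u a v heq hau
    exact h ⟨u, a, v, heq, hau⟩
  · rintro h ⟨u, a, v, heq, hau⟩
    exact h u a v heq hau

lemma CatL_phi {l : List ℕ} (h : CatL l) : CatL (phi l) := by
  obtain ⟨h1, h2, h3⟩ := h
  refine ⟨?_, ?_, ?_⟩
  · intro x hx
    exact h1 x (mem_phi.mp hx)
  · rw [head?_phi]; exact h2
  · exact chain'_phi (fun a => by omega) h3

lemma CatL_psi {l : List ℕ} (h : CatL l) : CatL (psi l) := by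
  obtain ⟨h1, h2, h3⟩ := h
  refine ⟨?_, ?_, ?_⟩
  · intro x hx
    exact h1 x (mem_psi.mp hx)
  · rw [head?_psi]; exact h2
  · exact chain'_psi (fun a => by omega) h3

def Phi {n : ℕ} (w : Fin n → ℕ) : Fin n → ℕ := fun i => (phi (List.ofFn w)).getD i 0
def Psi {n : ℕ} (w : Fin n → ℕ) : Fin n → ℕ := fun i => (psi (List.ofFn w)).getD i 0

lemma ofFn_getD {n : ℕ} (l : List ℕ) (h : l.length = n) :
    List.ofFn (fun i : Fin n => l.getD i 0) = l := by
  apply List.ext_getElem (by simp [h])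
  intro i h1 h2
  rw [List.getElem_ofFn, List.getD_eq_getElem l 0 h2]

lemma ofFn_Phi {n : ℕ} {w : Fin n → ℕ} (hA : AvA (List.ofFn w)) :
    List.ofFn (Phi w) = phi (List.ofFn w) := by
  apply ofFn_getD
  rw [length_phi hA, List.length_ofFn]

lemma ofFn_Psi {n : ℕ} {w : Fin n → ℕ} (hB : AvB (List.ofFn w)) :
    List.ofFn (Psi w) = psi (List.ofFn w) := by
  apply ofFn_getD
  rw [length_psi hB, List.length_ofFn]

lemma key {n : ℕ} (hn : 1 ≤ n) (Q : List ℕ → Prop)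
    (hQ : ∀ l₁ l₂ : List ℕ, (∀ x, x ∈ l₁ ↔ x ∈ l₂) → l₁.getLast? = l₂.getLast? →
      Q l₁ → Q l₂) :
    {w : Fin n → ℕ | IsCatalanWord w ∧ ¬ Contains11_1 w ∧ Q (List.ofFn w)}.ncard =
    {w : Fin n → ℕ | IsCatalanWord w ∧ ¬ Contains1_11 w ∧ Q (List.ofFn w)}.ncard := by
  set S := {w : Fin n → ℕ | IsCatalanWord w ∧ ¬ Contains11_1 w ∧ Q (List.ofFn w)} with hS
  set T := {w : Fin n → ℕ | IsCatalanWord w ∧ ¬ Contains1_11 w ∧ Q (List.ofFn w)} with hT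
  have hmapsPhi : Set.MapsTo Phi S T := by
    rintro w ⟨hC, hA, hq⟩
    rw [not_contains11_1_iff] at hA
    have hofn : List.ofFn (Phi w) = phi (List.ofFn w) := ofFn_Phi hA
    refine ⟨?_, ?_, ?_⟩
    · rw [isCatalan_iff (by omega), hofn]
      exact CatL_phi ((isCatalan_iff (by omega) w).mp hC)
    · rw [not_contains1_11_iff, hofn]
      exact avB_phi _
    · rw [hofn]
      exact hQ _ _ (fun x => mem_phi.symm) (getLast?_phi _).symm hq
  have hmapsPsi : Set.MapsTo Psi T S := by
    rintro w ⟨hC, hB, hq⟩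
    rw [not_contains1_11_iff] at hB
    have hofn : List.ofFn (Psi w) = psi (List.ofFn w) := ofFn_Psi hB
    refine ⟨?_, ?_, ?_⟩
    · rw [isCatalan_iff (by omega), hofn]
      exact CatL_psi ((isCatalan_iff (by omega) w).mp hC)
    · rw [not_contains11_1_iff, hofn]
      exact avA_psi _
    · rw [hofn]
      exact hQ _ _ (fun x => mem_psi.symm) (getLast?_psi _).symm hq
  have hgetD : ∀ (w : Fin n → ℕ) (i : Fin n), (List.ofFn w).getD ↑i 0 = w i := by
    intro w i
    rw [List.getD_eq_getElem (List.ofFn w) 0 (by simp [i.2]), List.getElem_ofFn]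
  have hinv : Set.InvOn Psi Phi S T := by
    constructor
    · rintro w ⟨hC, hA, hq⟩
      rw [not_contains11_1_iff] at hA
      funext i
      show (psi (List.ofFn (Phi w))).getD i 0 = w i
      rw [ofFn_Phi hA, psi_phi hA, hgetD]
    · rintro w ⟨hC, hB, hq⟩
      rw [not_contains1_11_iff] at hB
      funext i
      show (phi (List.ofFn (Psi w))).getD i 0 = w i
      rw [ofFn_Psi hB, phi_psi hB, hgetD]
  have hbij : Set.BijOn Phi S T := hinv.bijOn hmapsPhi hmapsPsi
  rw [← hbij.image_eq]
  exact (Set.ncard_image_of_injOn hbij.injOn).symm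

end CatAux

theorem catalan_avoid_11_1_eq_avoid_1_11 (n : ℕ) (hn : 1 ≤ n) :
    Set.ncard {w : Fin n → ℕ | IsCatalanWord w ∧ ¬ Contains11_1 w} =
      Set.ncard {w : Fin n → ℕ | IsCatalanWord w ∧ ¬ Contains1_11 w} ∧
    (∀ m : ℕ, 1 ≤ m →
      Set.ncard {w : Fin n → ℕ | IsCatalanWord w ∧ ¬ Contains11_1 w ∧
          (∀ i, w i ≤ m) ∧ (∃ i, w i = m)} =
      Set.ncard {w : Fin n → ℕ | IsCatalanWord w ∧ ¬ Contains1_11 w ∧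
          (∀ i, w i ≤ m) ∧ (∃ i, w i = m)}) ∧
    (∀ a : ℕ, 1 ≤ a →
      Set.ncard {w : Fin n → ℕ | IsCatalanWord w ∧ ¬ Contains11_1 w ∧
          w ⟨n - 1, by omega⟩ = a} =
      Set.ncard {w : Fin n → ℕ | IsCatalanWord w ∧ ¬ Contains1_11 w ∧
          w ⟨n - 1, by omega⟩ = a}) := by
  refine ⟨?_, ?_, ?_⟩
  · have := CatAux.key hn (fun _ => True) (by intro _ _ _ _ h; exact h)
    simpa using this
  · intro m hm
    have hmemiff : ∀ (w : Fin n → ℕ),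
        ((∀ i, w i ≤ m) ∧ (∃ i, w i = m)) ↔
        ((∀ x ∈ List.ofFn w, x ≤ m) ∧ m ∈ List.ofFn w) := by
      intro w
      simp only [List.mem_ofFn, Set.mem_range]
      constructor
      · rintro ⟨h1, i, hi⟩
        exact ⟨fun x ⟨i, hx⟩ => hx ▸ h1 i, ⟨i, hi⟩⟩
      · rintro ⟨h1, i, hi⟩
        exact ⟨fun i => h1 (w i) ⟨i, rfl⟩, ⟨i, hi⟩⟩
    have := CatAux.key hn (fun l => (∀ x ∈ l, x ≤ m) ∧ m ∈ l) (by
      rintro l₁ l₂ hmem _ ⟨h1, h2⟩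
      exact ⟨fun x hx => h1 x ((hmem x).mpr hx), (hmem m).mp h2⟩)
    convert this using 3 <;>
      · ext w
        rw [hmemiff w]
  · intro a ha
    have hlast0 : ∀ (w : Fin n → ℕ),
        (List.ofFn w).getLast? = some (w ⟨n - 1, by omega⟩) := by
      intro w
      have h1 : (List.ofFn w).length - 1 < (List.ofFn w).length := by simp; omega
      rw [List.getLast?_eq_getElem?, List.getElem?_eq_getElem h1]
      congr 1
      rw [List.getElem_ofFn]
      congr 1
      simp
    have hlastiff : ∀ (w : Fin n → ℕ),
        (w ⟨n - 1, by omega⟩ = a) ↔ (List.ofFn w).getLast? = some a := by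
      intro w
      rw [hlast0 w]
      constructor
      · intro h; rw [h]
      · intro h; exact Option.some_inj.mp h
    have := CatAux.key hn (fun l => l.getLast? = some a) (by
      rintro l₁ l₂ _ hlast h
      rw [← hlast]; exact h)
    convert this using 3 <;>
      · ext w
        rw [hlastiff w]
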